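/- Let 1 < p < ∞ and let C_p be the unique positive root of (p−1)x^p − p x^{p−1} − 1 = 0. Define a(u) = |2u|^{−1/p} for u ≠ 0. Then for every t ≠ 0, the uncentered Hardy–Littlewood maximal function of a with respect to Lebesgue measure satisfies M a(t) = C_p |2t|^{−1/p}. -/

import Mathlib

open MeasureTheory Set ENNReal

/-- Symmetric decreasing rearrangement (w.r.t. the measure `μ`) of an
`ℝ≥0∞`-valued function `g` on `ℝ`:  `g*(x) = inf {t > 0 | μ {g > t} ≤ 2|x|}`. -/
noncomputable def rearrE (μ : Measure ℝ) (g : ℝ → ℝ≥0∞) (x : ℝ) : ℝ≥0∞ :=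
  sInf {t : ℝ≥0∞ | 0 < t ∧ μ {y | t < g y} ≤ ENNReal.ofReal (2 * |x|)}

/-- Symmetric decreasing rearrangement (w.r.t. `μ`) of a real-valued function:
`f*(x) = inf {t > 0 | μ {|f| > t} ≤ 2|x|}`. -/
noncomputable def rearr (μ : Measure ℝ) (f : ℝ → ℝ) (x : ℝ) : ℝ≥0∞ :=
  rearrE μ (fun y => ENNReal.ofReal |f y|) x

/-- Uncentered Hardy-Littlewood maximal function w.r.t. `μ` of an
`ℝ≥0∞`-valued function: the sup of averages over open intervals containing `x`
of positive `μ`-measure. -/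
noncomputable def maximalE (μ : Measure ℝ) (g : ℝ → ℝ≥0∞) (x : ℝ) : ℝ≥0∞ :=
  ⨆ (a : ℝ) (b : ℝ) (_ : x ∈ Ioo a b) (_ : 0 < μ (Ioo a b)),
    (μ (Ioo a b))⁻¹ * ∫⁻ y in Ioo a b, g y ∂μ

/-- Uncentered Hardy-Littlewood maximal function `M_μ f` of a real-valued `f`. -/
noncomputable def maximal (μ : Measure ℝ) (f : ℝ → ℝ) (x : ℝ) : ℝ≥0∞ :=
  maximalE μ (fun y => ENNReal.ofReal |f y|) x

/-- Weak `L^p` quasinorm w.r.t. `μ` of an `ℝ≥0∞`-valued function: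
`sup_{t>0} t · μ({g > t})^(1/p)`. -/
noncomputable def wnormE (μ : Measure ℝ) (g : ℝ → ℝ≥0∞) (p : ℝ) : ℝ≥0∞ :=
  ⨆ (t : ℝ) (_ : 0 < t), ENNReal.ofReal t * μ {x | ENNReal.ofReal t < g x} ^ (1 / p)

/-- Weak `L^p` quasinorm `‖f‖_{L^{p,∞}(ℝ,dμ)} = sup_{t>0} t · μ({|f| > t})^(1/p)`. -/
noncomputable def wnorm' (μ : Measure ℝ) (f : ℝ → ℝ) (p : ℝ) : ℝ≥0∞ :=
  wnormE μ (fun x => ENNReal.ofReal |f x|) p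

/-- `f` is distributionally symmetric: for every `t > 0` the sets
`{x > 0 | f x > t}` and `{x < 0 | f x > t}` have the same Lebesgue measure. -/
def DistribSymm (f : ℝ → ℝ) : Prop :=
  ∀ t : ℝ, 0 < t → volume {x | 0 < x ∧ t < f x} = volume {x | x < 0 ∧ t < f x}


section helpers
open intervalIntegral


lemma abs_rpow_intble {r : ℝ} (hr : -1 < r) (a b : ℝ) :
    IntervalIntegrable (fun u : ℝ => |u| ^ r) volume a b := by
  have key : ∀ c : ℝ, IntervalIntegrable (fun u : ℝ => |u| ^ r) volume 0 c := by
    intro c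
    rcases le_or_gt 0 c with h | h
    · rw [intervalIntegrable_iff, uIoc_of_le h]
      have h1 : IntegrableOn (fun u : ℝ => u ^ r) (Ioc (0:ℝ) c) volume := by
        rw [← uIoc_of_le h, ← intervalIntegrable_iff]
        exact intervalIntegrable_rpow' hr
      exact h1.congr_fun (fun u hu => by simp [abs_of_pos hu.1]) measurableSet_Ioc
    · rw [intervalIntegrable_iff, uIoc_of_ge h.le]
      have h0 : IntervalIntegrable (fun u : ℝ => u ^ r) volume 0 (-c) :=
        intervalIntegrable_rpow' hr
      have h2 : IntervalIntegrable (fun u : ℝ => (-u) ^ r) volume c 0 := by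
        have := (IntervalIntegrable.iff_comp_neg).mp h0
        simpa using this.symm
      rw [intervalIntegrable_iff, uIoc_of_le h.le] at h2
      exact h2.congr_fun (fun u hu => by rw [abs_of_nonpos hu.2]) measurableSet_Ioc
  exact (key a).symm.trans (key b)

lemma two_abs_rpow_intble {r : ℝ} (hr : -1 < r) (a b : ℝ) :
    IntervalIntegrable (fun u : ℝ => |2*u| ^ r) volume a b := by
  have h := (abs_rpow_intble hr (2*a) (2*b)).comp_mul_left (c := 2)
  simpa using h

lemma integral_pos_side {r : ℝ} (hr : -1 < r) {a b : ℝ} (ha : 0 ≤ a) (hab : a ≤ b) :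
    ∫ u in a..b, |2*u| ^ r = 2 ^ r * ((b ^ (r+1) - a ^ (r+1)) / (r+1)) := by
  have hcg : ∀ u ∈ uIcc a b, |2*u| ^ r = 2 ^ r * u ^ r := by
    intro u hu
    rw [uIcc_of_le hab] at hu
    have hu0 : 0 ≤ u := ha.trans hu.1
    rw [abs_of_nonneg (by linarith), Real.mul_rpow (by norm_num) hu0]
  rw [integral_congr hcg, intervalIntegral.integral_const_mul, integral_rpow (Or.inl hr)]

lemma integral_neg_reflect (r : ℝ) (a : ℝ) :
    ∫ u in a..(0:ℝ), |2*u| ^ r = ∫ u in (0:ℝ)..(-a), |2*u| ^ r := by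
  have h := integral_comp_neg (a := a) (b := 0) (f := fun u : ℝ => |2*u| ^ r)
  simp only [mul_neg, abs_neg, neg_zero] at h
  exact h

lemma lint_eq {r : ℝ} (hr : -1 < r) {a b : ℝ} (hab : a ≤ b) :
    ∫⁻ u in Ioo a b, ENNReal.ofReal (|2*u| ^ r) = ENNReal.ofReal (∫ u in a..b, |2*u| ^ r) := by
  rw [integral_of_le hab, integral_Ioc_eq_integral_Ioo,
    ofReal_integral_eq_lintegral_ofReal
      ((two_abs_rpow_intble hr a b).1.mono_set Ioo_subset_Ioc_self)
      (Filter.Eventually.of_forall fun u => Real.rpow_nonneg (abs_nonneg _) r)]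

lemma alg1 {p C : ℝ} (hp : 1 < p) (hC : 0 < C)
    (hroot : (p - 1) * C ^ p - p * C ^ (p - 1) - 1 = 0) : 1 < C := by
  by_contra hle
  push_neg at hle
  have h1 : C ^ p ≤ C ^ (p-1) := Real.rpow_le_rpow_of_exponent_ge hC hle (by linarith)
  have h2 : (0:ℝ) < C ^ (p-1) := Real.rpow_pos_of_pos hC _
  nlinarith [mul_le_mul_of_nonneg_left h1 (by linarith : (0:ℝ) ≤ p - 1)]

lemma alg2 {p C : ℝ} (hp : 1 < p) (hC : 0 < C)
    (hroot : (p - 1) * C ^ p - p * C ^ (p - 1) - 1 = 0) :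
    (p - 1) * C = p + C ^ (1 - p) := by
  have e1 : C ^ p = C ^ (p-1) * C := by
    rw [← Real.rpow_add_one (ne_of_gt hC)]; ring_nf
  have hy : (0:ℝ) < C ^ (p-1) := Real.rpow_pos_of_pos hC _
  have e2 : C ^ (1-p) * C ^ (p-1) = 1 := by
    rw [← Real.rpow_add hC]; norm_num
  have h3 : ((p-1)*C) * C^(p-1) = (p + C^(1-p)) * C^(p-1) := by
    rw [e1] at hroot; nlinarith [hroot, e2]
  exact mul_right_cancel₀ (ne_of_gt hy) h3

lemma algI {p C : ℝ} (hp : 1 < p) (hC : 0 < C)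
    (hroot : (p - 1) * C ^ p - p * C ^ (p - 1) - 1 = 0) {t : ℝ} (ht : 0 < t) :
    2^(-(1/p)) * ((t ^ (-(1/p)+1) + (C^(-p)*t) ^ (-(1/p)+1)) / (-(1/p)+1))
      = (C * (2*t)^(-(1/p))) * (t + C^(-p)*t) := by
  have hp0 : (0:ℝ) < p := by linarith
  have hσ : (0:ℝ) < C^(-p) := Real.rpow_pos_of_pos hC _
  have e1 : (C^(-p)*t)^(-(1/p)+1) = C^(1-p) * t^(-(1/p)+1) := by
    rw [Real.mul_rpow hσ.le ht.le, ← Real.rpow_mul hC.le]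
    congr 2
    field_simp
    ring
  have e3 : t^(-(1/p)+1) = t^(-(1/p)) * t := Real.rpow_add_one (ne_of_gt ht) _
  have e4 : (2*t)^(-(1/p)) = 2^(-(1/p)) * t^(-(1/p)) := Real.mul_rpow (by norm_num) ht.le
  have e5 : C^(-p) = C^(1-p) / C := by
    rw [eq_div_iff (ne_of_gt hC), ← Real.rpow_add_one (ne_of_gt hC)]
    ring_nf
  have halg2 := alg2 hp hC hroot
  have hq : -(1/p)+1 = (p-1)/p := by field_simp; ring
  rw [e1, e3, e4, e5, hq]
  have hA : (0:ℝ) < (2:ℝ)^(-(1/p)) := Real.rpow_pos_of_pos (by norm_num) _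
  have hz : (0:ℝ) < C^(1-p) := Real.rpow_pos_of_pos hC _
  set A := (2:ℝ)^(-(1/p)) with hAdef
  set B := t^(-(1/p)) with hBdef
  set z := C^(1-p) with hzdef
  field_simp [show p - 1 ≠ 0 from by linarith]
  linear_combination (-B) * halg2

lemma hr_of_hp {p : ℝ} (hp : 1 < p) : (-1:ℝ) < -(1/p) := by
  have h1 : 1/p < 1 := by rw [div_lt_one (by linarith)]; linarith
  linarith

lemma intI {p C : ℝ} (hp : 1 < p) (hC : 0 < C)
    (hroot : (p - 1) * C ^ p - p * C ^ (p - 1) - 1 = 0) {t : ℝ} (ht : 0 < t) :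
    ∫ u in (-(C^(-p)*t))..t, |2*u| ^ (-(1/p))
      = (C * (2*t)^(-(1/p))) * (t + C^(-p)*t) := by
  have hr := hr_of_hp hp
  have hσt : 0 < C^(-p)*t := mul_pos (Real.rpow_pos_of_pos hC _) ht
  have h1 := two_abs_rpow_intble hr (-(C^(-p)*t)) 0
  have h2 := two_abs_rpow_intble hr 0 t
  rw [← integral_add_adjacent_intervals h1 h2, integral_neg_reflect, neg_neg,
    integral_pos_side hr le_rfl hσt.le, integral_pos_side hr le_rfl ht.le,
    ← algI hp hC hroot ht, Real.zero_rpow (by linarith : -(1/p)+1 ≠ 0)]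
  ring

lemma main_ineq {p C : ℝ} (hp : 1 < p) (hC : 0 < C)
    (hroot : (p - 1) * C ^ p - p * C ^ (p - 1) - 1 = 0)
    {t a b : ℝ} (ht : 0 < t) (hat : a < t) (htb : t < b) :
    ∫ u in a..b, |2*u| ^ (-(1/p)) ≤ (C * (2*t)^(-(1/p))) * (b - a) := by
  have hr := hr_of_hp hp
  have hr0 : -(1/p) < 0 := by
    have : (0:ℝ) < 1/p := by positivity
    linarith
  have hC1 : 1 < C := alg1 hp hC hroot
  have hσ : (0:ℝ) < C^(-p) := Real.rpow_pos_of_pos hC _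
  have hσ1 : C^(-p) < 1 := Real.rpow_lt_one_of_one_lt_of_neg hC1 (by linarith)
  set s : ℝ := C^(-p)*t with hsdef
  have hs : 0 < s := mul_pos hσ ht
  have hst : s < t := by
    calc s < 1 * t := by rw [hsdef]; exact mul_lt_mul_of_pos_right hσ1 ht
    _ = t := one_mul t
  set K : ℝ := C * (2*t)^(-(1/p)) with hKdef
  have h2t : (0:ℝ) < (2*t)^(-(1/p)) := Real.rpow_pos_of_pos (by linarith) _
  have hK : 0 < K := mul_pos hC h2t
  have hKs : (2*s)^(-(1/p)) = K := by
    have he : (2*s) = C^(-p)*(2*t) := by rw [hsdef]; ring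
    rw [he, Real.mul_rpow hσ.le (by linarith), ← Real.rpow_mul hC.le, hKdef]
    congr 1
    rw [show (-p)*(-(1/p)) = 1 by field_simp, Real.rpow_one]
  have hint : ∀ x y : ℝ, IntervalIntegrable (fun u : ℝ => |2*u|^(-(1/p))) volume x y :=
    two_abs_rpow_intble hr
  have h0ne : ∀ᵐ (u:ℝ) ∂(volume : Measure ℝ), u ≠ 0 := by
    rw [ae_iff]
    simp only [ne_eq, not_not, setOf_eq_eq_singleton]
    exact Real.volume_singleton
  -- part 1 : over [t, b]
  have part1 : ∫ u in t..b, |2*u|^(-(1/p)) ≤ K * (b - t) := by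
    have hmono : ∀ u ∈ Icc t b, |2*u|^(-(1/p)) ≤ K := by
      intro u hu
      have h1 : |2*u| = 2*u := abs_of_pos (by nlinarith [hu.1])
      have h2 : |2*u|^(-(1/p)) ≤ (2*t)^(-(1/p)) := by
        rw [h1]
        exact Real.rpow_le_rpow_of_nonpos (by linarith) (by nlinarith [hu.1]) hr0.le
      nlinarith [h2t]
    calc ∫ u in t..b, |2*u|^(-(1/p)) ≤ ∫ _ in t..b, K :=
          integral_mono_on htb.le (hint t b) intervalIntegrable_const hmono
      _ = K * (b - t) := by rw [intervalIntegral.integral_const, smul_eq_mul]; ring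
  -- part 2 : over [a, t]
  have part2 : ∫ u in a..t, |2*u|^(-(1/p)) ≤ K * (t - a) := by
    rcases le_or_gt s a with hcase | hcase
    · -- s ≤ a < t : pointwise bound
      have hmono : ∀ u ∈ Icc a t, |2*u|^(-(1/p)) ≤ K := by
        intro u hu
        have hu0 : 0 < u := lt_of_lt_of_le hs (hcase.trans hu.1)
        have h1 : |2*u| = 2*u := abs_of_pos (by linarith)
        rw [← hKs, h1]
        exact Real.rpow_le_rpow_of_nonpos (by linarith) (by nlinarith [hu.1, hcase]) hr0.le
      calc ∫ u in a..t, |2*u|^(-(1/p)) ≤ ∫ _ in a..t, K :=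
            integral_mono_on hat.le (hint a t) intervalIntegrable_const hmono
        _ = K * (t - a) := by rw [intervalIntegral.integral_const, smul_eq_mul]; ring
    rcases le_or_gt (-s) a with hcase2 | hcase2
    · -- -s ≤ a < s
      have hlow : K * (a + s) ≤ ∫ u in (-s)..a, |2*u|^(-(1/p)) := by
        have hbnd : (fun _ : ℝ => K) ≤ᵐ[volume.restrict (Icc (-s) a)]
            fun u : ℝ => |2*u|^(-(1/p)) := by
          filter_upwards [ae_restrict_mem measurableSet_Icc, ae_restrict_of_ae h0ne]
            with u hu hu0
          have habs : |2*u| ≤ 2*s := by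
            rw [abs_mul, abs_two]
            have : |u| ≤ s := abs_le.mpr ⟨hu.1, hu.2.trans hcase.le⟩
            linarith
          have hpos : 0 < |2*u| := by
            rw [abs_pos]
            intro hcon
            exact hu0 (by linarith [mul_eq_zero.mp hcon] ; )
          rw [← hKs]
          exact Real.rpow_le_rpow_of_nonpos hpos habs hr0.le
        calc K * (a + s) = ∫ _ in (-s)..a, K := by rw [intervalIntegral.integral_const, smul_eq_mul]; ring
          _ ≤ ∫ u in (-s)..a, |2*u|^(-(1/p)) :=
            integral_mono_ae_restrict hcase2 intervalIntegrable_const (hint (-s) a) hbnd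
      have hadd : (∫ u in (-s)..a, |2*u|^(-(1/p))) + ∫ u in a..t, |2*u|^(-(1/p))
          = ∫ u in (-s)..t, |2*u|^(-(1/p)) :=
        integral_add_adjacent_intervals (hint (-s) a) (hint a t)
      have hI : ∫ u in (-s)..t, |2*u|^(-(1/p)) = K * (t + s) := by
        rw [hsdef, intI hp hC hroot ht, hKdef]
      linarith
    · -- a < -s
      have hup : ∫ u in a..(-s), |2*u|^(-(1/p)) ≤ K * (-s - a) := by
        have hmono : ∀ u ∈ Icc a (-s), |2*u|^(-(1/p)) ≤ K := by
          intro u hu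
          have h1 : |2*u| = -(2*u) := abs_of_neg (by nlinarith [hu.2])
          rw [← hKs, h1]
          exact Real.rpow_le_rpow_of_nonpos (by linarith) (by nlinarith [hu.2]) hr0.le
        calc ∫ u in a..(-s), |2*u|^(-(1/p)) ≤ ∫ _ in a..(-s), K :=
              integral_mono_on hcase2.le (hint a (-s)) intervalIntegrable_const hmono
          _ = K * (-s - a) := by rw [intervalIntegral.integral_const, smul_eq_mul]; ring
      have hadd : (∫ u in a..(-s), |2*u|^(-(1/p))) + ∫ u in (-s)..t, |2*u|^(-(1/p))
          = ∫ u in a..t, |2*u|^(-(1/p)) :=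
        integral_add_adjacent_intervals (hint a (-s)) (hint (-s) t)
      have hI : ∫ u in (-s)..t, |2*u|^(-(1/p)) = K * (t + s) := by
        rw [hsdef, intI hp hC hroot ht, hKdef]
      linarith
  have hadd : (∫ u in a..t, |2*u|^(-(1/p))) + ∫ u in t..b, |2*u|^(-(1/p))
      = ∫ u in a..b, |2*u|^(-(1/p)) :=
    integral_add_adjacent_intervals (hint a t) (hint t b)
  linarith


lemma le_maximalE {μ : Measure ℝ} {g : ℝ → ℝ≥0∞} {x a b : ℝ}
    (h1 : x ∈ Ioo a b) (h2 : 0 < μ (Ioo a b)) :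
    (μ (Ioo a b))⁻¹ * ∫⁻ y in Ioo a b, g y ∂μ ≤ maximalE μ g x := by
  rw [maximalE]
  exact le_iSup_of_le a <| le_iSup_of_le b <| le_iSup_of_le h1 <| le_iSup_of_le h2 le_rfl

lemma maximalE_neg_le (g : ℝ → ℝ≥0∞) (hg : ∀ y, g (-y) = g y) (x : ℝ) :
    maximalE volume g (-x) ≤ maximalE volume g x := by
  rw [maximalE]
  refine iSup_le fun a => iSup_le fun b => iSup_le fun hmem => iSup_le fun hpos => ?_
  have hmem' : x ∈ Ioo (-b) (-a) := by
    obtain ⟨h1, h2⟩ := hmem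
    exact ⟨by linarith, by linarith⟩
  have hvol : volume (Ioo (-b) (-a)) = volume (Ioo a b) := by
    rw [Real.volume_Ioo, Real.volume_Ioo]
    congr 1
    ring
  have hlint : ∫⁻ y in Ioo (-b) (-a), g y = ∫⁻ y in Ioo a b, g y := by
    have h := (Measure.measurePreserving_neg (volume : Measure ℝ)).setLIntegral_comp_emb
      (MeasurableEquiv.neg ℝ).measurableEmbedding g (Ioo a b)
    rw [image_neg_Ioo] at h
    rw [← h]
    simp only [show ∀ y : ℝ, (MeasurableEquiv.neg ℝ) y = -y from fun _ => rfl, hg]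
  calc (volume (Ioo a b))⁻¹ * ∫⁻ y in Ioo a b, g y
      = (volume (Ioo (-b) (-a)))⁻¹ * ∫⁻ y in Ioo (-b) (-a), g y := by rw [hvol, hlint]
    _ ≤ maximalE volume g x := le_maximalE hmem' (by rw [hvol]; exact hpos)

lemma maximalE_neg (g : ℝ → ℝ≥0∞) (hg : ∀ y, g (-y) = g y) (x : ℝ) :
    maximalE volume g (-x) = maximalE volume g x := by
  refine le_antisymm (maximalE_neg_le g hg x) ?_
  have := maximalE_neg_le g hg (-x)
  rwa [neg_neg] at this

lemma stmt13_pos (p : ℝ) (hp : 1 < p) (C : ℝ) (hC : 0 < C)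
    (hroot : (p - 1) * C ^ p - p * C ^ (p - 1) - 1 = 0)
    (t : ℝ) (ht : 0 < t) :
    maximal volume (fun u => |2 * u| ^ (-(1 / p))) t =
      ENNReal.ofReal (C * |2 * t| ^ (-(1 / p))) := by
  have hr := hr_of_hp hp
  have hC1 : 1 < C := alg1 hp hC hroot
  have hσ : (0:ℝ) < C^(-p) := Real.rpow_pos_of_pos hC _
  set s : ℝ := C^(-p)*t with hsdef
  have hs : 0 < s := mul_pos hσ ht
  set K : ℝ := C * (2*t)^(-(1/p)) with hKdef
  have h2t : (0:ℝ) < (2*t)^(-(1/p)) := Real.rpow_pos_of_pos (by linarith) _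
  have hK : 0 < K := mul_pos hC h2t
  have habs : ∀ u : ℝ, |(|2*u| ^ (-(1/p)))| = |2*u| ^ (-(1/p)) :=
    fun u => abs_of_nonneg (Real.rpow_nonneg (abs_nonneg _) _)
  have h2tK : ENNReal.ofReal (C * |2 * t| ^ (-(1 / p))) = ENNReal.ofReal K := by
    rw [hKdef, abs_of_pos (by linarith : (0:ℝ) < 2*t)]
  rw [h2tK]
  refine le_antisymm ?_ ?_
  · rw [maximal, maximalE]
    refine iSup_le fun a => iSup_le fun b => iSup_le fun hmem => iSup_le fun hpos => ?_
    simp only [habs]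
    have hab : a < b := hmem.1.trans hmem.2
    have hba : (0:ℝ) < b - a := by linarith
    rw [Real.volume_Ioo, lint_eq hr hab.le]
    have hle := main_ineq hp hC hroot ht hmem.1 hmem.2
    calc (ENNReal.ofReal (b-a))⁻¹ * ENNReal.ofReal (∫ u in a..b, |2*u| ^ (-(1/p)))
        ≤ (ENNReal.ofReal (b-a))⁻¹ * ENNReal.ofReal (K*(b-a)) := by
          gcongr
      _ = (ENNReal.ofReal (b-a))⁻¹ * (ENNReal.ofReal K * ENNReal.ofReal (b-a)) := by
          rw [ENNReal.ofReal_mul hK.le]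
      _ = ENNReal.ofReal K * ((ENNReal.ofReal (b-a))⁻¹ * ENNReal.ofReal (b-a)) := by
          ring
      _ = ENNReal.ofReal K := by
          rw [ENNReal.inv_mul_cancel (ENNReal.ofReal_pos.mpr hba).ne' ENNReal.ofReal_ne_top, mul_one]
  · -- lower bound via limit of averages over (-s, b) as b → t⁺
    set G : ℝ → ℝ := fun b =>
      2^(-(1/p)) * ((b^(-(1/p)+1) + s^(-(1/p)+1))/(-(1/p)+1)) / (b + s) with hGdef
    have hint : ∀ x y : ℝ, IntervalIntegrable (fun u : ℝ => |2*u|^(-(1/p))) volume x y :=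
      two_abs_rpow_intble hr
    have claim1 : ∀ b : ℝ, 0 < b →
        (∫ u in (-s)..b, |2*u| ^ (-(1/p))) / (b + s) = G b := by
      intro b hb
      have hsplit : (∫ u in (-s)..(0:ℝ), |2*u|^(-(1/p))) + ∫ u in (0:ℝ)..b, |2*u|^(-(1/p))
          = ∫ u in (-s)..b, |2*u|^(-(1/p)) :=
        integral_add_adjacent_intervals (hint (-s) 0) (hint 0 b)
      rw [← hsplit, integral_neg_reflect, neg_neg, integral_pos_side hr le_rfl hs.le,
        integral_pos_side hr le_rfl hb.le, hGdef,
        Real.zero_rpow (by linarith : (0:ℝ) < -(1/p)+1).ne']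
      ring
    have key : ∀ b : ℝ, t < b →
        ENNReal.ofReal (G b) ≤ maximal volume (fun u => |2 * u| ^ (-(1 / p))) t := by
      intro b hb
      rw [maximal]
      simp only [habs]
      have hb0 : (0:ℝ) < b := lt_trans ht hb
      have hbs : (0:ℝ) < b + s := by linarith
      have hmem : t ∈ Ioo (-s) b := ⟨by linarith, hb⟩
      have hpos : 0 < volume (Ioo (-s) b) := by
        rw [Real.volume_Ioo]
        simp only [ENNReal.ofReal_pos]
        linarith
      have hterm := le_maximalE (μ := volume)
        (g := fun y => ENNReal.ofReal |(|2*y| ^ (-(1/p)))|) hmem hpos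
      simp only [habs] at hterm
      rw [Real.volume_Ioo, lint_eq hr (by linarith : -s ≤ b)] at hterm
      rw [← claim1 b hb0]
      refine le_trans (le_of_eq ?_) hterm
      rw [ENNReal.ofReal_div_of_pos hbs, ENNReal.div_eq_inv_mul]
      congr 2
      ring
    have hGt : G t = K := by
      have hI := algI hp hC hroot ht
      rw [← hsdef, ← hKdef] at hI
      simp only [hGdef]
      rw [hI]
      field_simp
    have hcont : ContinuousAt G t := by
      rw [hGdef]
      apply ContinuousAt.div
      · exact continuousAt_const.mul
          (((Real.continuousAt_rpow_const t _ (Or.inl (ne_of_gt ht))).add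
            continuousAt_const).div_const _)
      · exact continuousAt_id.add continuousAt_const
      · positivity
    have htend : Filter.Tendsto (fun b => ENNReal.ofReal (G b)) (nhdsWithin t (Ioi t))
        (nhds (ENNReal.ofReal K)) := by
      rw [← hGt]
      exact (ENNReal.continuous_ofReal.continuousAt.comp hcont).mono_left nhdsWithin_le_nhds
    refine le_of_tendsto htend ?_
    filter_upwards [self_mem_nhdsWithin] with b hb
    exact key b hb

end helpers

/-- for `a(u) = |2u|^{-1/p}` one has `M a (t) = C_p |2t|^{-1/p}`
for every `t ≠ 0`, where `C_p` is the unique positive root of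
`(p-1)x^p - p x^(p-1) - 1 = 0`. -/
theorem stmt_13 (p : ℝ) (hp : 1 < p) (C : ℝ) (hC : 0 < C)
    (hroot : (p - 1) * C ^ p - p * C ^ (p - 1) - 1 = 0)
    (t : ℝ) (ht : t ≠ 0) :
    maximal volume (fun u => |2 * u| ^ (-(1 / p))) t =
      ENNReal.ofReal (C * |2 * t| ^ (-(1 / p))) := by
  rcases ht.lt_or_gt with htneg | htpos
  · have htp : 0 < -t := by linarith
    have hres := stmt13_pos p hp C hC hroot (-t) htp
    have heven : ∀ y : ℝ, ENNReal.ofReal |(|2*(-y)| ^ (-(1/p)))| = ENNReal.ofReal |(|2*y| ^ (-(1/p)))| := by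
      intro y
      rw [show (2:ℝ)*(-y) = -(2*y) by ring, abs_neg]
    have := maximalE_neg (fun y => ENNReal.ofReal |(|2*y| ^ (-(1/p)))|) heven (-t)
    rw [neg_neg] at this
    rw [maximal] at hres ⊢
    rw [this, hres, show (2:ℝ)*(-t) = -(2*t) by ring, abs_neg]
  · exact stmt13_pos p hp C hC hroot t htpos
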